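/- arXiv:1212.0822 — 3 statements merged into one kernel-verified Lean document; each statement's English description precedes it below -/
import Mathlib

section
/- Every 2×2 unitary matrix U can be written in the form U = e^{iδ} · D(α) · H · D(β) · H · D(γ) for some real numbers δ, α, β, γ, where D(θ) denotes the diagonal unitary diag(1, e^{iθ}) and H = (1/√2)·[[1,1],[1,−1]] is the Hadamard matrix. In particular, the ability to implement the gates D(θ) (i.e., Λ(e^{iθ})) together with H suffices to implement any single-qubit unitary up to global phase. -/
/-- The diagonal unitary `D(θ) = diag(1, e^{iθ})`, i.e. `Λ(e^{iθ})`. -/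
noncomputable def Dgate (θ : ℝ) : Matrix (Fin 2) (Fin 2) ℂ :=
  !![1, 0; 0, Complex.exp (θ * Complex.I)]

/-- The Hadamard matrix `H = (1/√2)·[[1,1],[1,−1]]`. -/
noncomputable def Hgate : Matrix (Fin 2) (Fin 2) ℂ :=
  ((1 / Real.sqrt 2 : ℝ) : ℂ) • !![1, 1; 1, -1]

lemma hsq : (((Real.sqrt 2 : ℝ) : ℂ))⁻¹ * (((Real.sqrt 2 : ℝ) : ℂ))⁻¹ = 2⁻¹ := by
  rw [← mul_inv, ← Complex.ofReal_mul, Real.mul_self_sqrt (by norm_num)]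
  norm_num

lemma S1 (x y t : ℂ) :
    Complex.exp (x*Complex.I) * ((2⁻¹ + 2⁻¹*Complex.exp (2*t*Complex.I)) * Complex.exp (y*Complex.I)) =
    Complex.exp ((x+t+y)*Complex.I) * Complex.cos t := by
  simp only [Complex.cos]
  field_simp
  ring_nf
  simp only [← Complex.exp_add]
  ring_nf

lemma S2 (x y t : ℂ) :
    Complex.exp (x*Complex.I) * ((2⁻¹ - 2⁻¹*Complex.exp (2*t*Complex.I)) * Complex.exp (y*Complex.I)) =
    -Complex.I * Complex.exp ((x+t+y)*Complex.I) * Complex.sin t := by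
  simp only [Complex.sin]
  field_simp
  ring_nf
  simp only [← Complex.exp_add, Complex.I_sq]
  ring_nf
  simp only [← Complex.exp_add]
  ring_nf

lemma S1' (x t : ℂ) :
    Complex.exp (x*Complex.I) * (2⁻¹ + 2⁻¹*Complex.exp (2*t*Complex.I)) =
    Complex.exp ((x+t)*Complex.I) * Complex.cos t := by
  have := S1 x 0 t
  simp only [zero_mul, Complex.exp_zero, add_zero, mul_one] at this
  linear_combination this

lemma S2' (x t : ℂ) :
    Complex.exp (x*Complex.I) * (2⁻¹ - 2⁻¹*Complex.exp (2*t*Complex.I)) =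
    -Complex.I * Complex.exp ((x+t)*Complex.I) * Complex.sin t := by
  have := S2 x 0 t
  simp only [zero_mul, Complex.exp_zero, add_zero, mul_one] at this
  linear_combination this

lemma hexpadd (x y : ℝ) : Complex.exp ((x:ℂ)*Complex.I) * Complex.exp ((y:ℂ)*Complex.I)
    = Complex.exp (((x:ℂ)+y)*Complex.I) := by
  rw [← Complex.exp_add]; ring_nf

lemma prod_eq (δ α γ t : ℝ) :
    Complex.exp (δ*Complex.I) • (Dgate α * Hgate * Dgate (2*t) * Hgate * Dgate γ) =
    !![Complex.exp (((δ:ℂ)+t)*Complex.I) * Real.cos t,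
       -Complex.I * Complex.exp (((δ:ℂ)+t+γ)*Complex.I) * Real.sin t;
       -Complex.I * Complex.exp (((δ:ℂ)+α+t)*Complex.I) * Real.sin t,
       Complex.exp (((δ:ℂ)+α+t+γ)*Complex.I) * Real.cos t] := by
  have hE := hexpadd δ α
  ext i j
  fin_cases i <;> fin_cases j <;>
    simp [Dgate, Hgate, Matrix.mul_apply, Fin.sum_univ_two] <;>
    push_cast
  · linear_combination S1' (δ:ℂ) (t:ℂ) + (Complex.exp ((δ:ℂ)*Complex.I) + Complex.exp ((δ:ℂ)*Complex.I)*Complex.exp (2*(t:ℂ)*Complex.I)) * hsq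
  · linear_combination S2 (δ:ℂ) (γ:ℂ) (t:ℂ) + (Complex.exp ((δ:ℂ)*Complex.I)*Complex.exp ((γ:ℂ)*Complex.I) - Complex.exp ((δ:ℂ)*Complex.I)*Complex.exp (2*(t:ℂ)*Complex.I)*Complex.exp ((γ:ℂ)*Complex.I)) * hsq
  · linear_combination S2' ((δ:ℂ)+α) (t:ℂ) + (Complex.exp ((δ:ℂ)*Complex.I)*Complex.exp ((α:ℂ)*Complex.I) - Complex.exp ((δ:ℂ)*Complex.I)*Complex.exp ((α:ℂ)*Complex.I)*Complex.exp (2*(t:ℂ)*Complex.I)) * hsq + ((2⁻¹:ℂ) - 2⁻¹*Complex.exp (2*(t:ℂ)*Complex.I)) * hE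
  · linear_combination S1 ((δ:ℂ)+α) (γ:ℂ) (t:ℂ) + (Complex.exp ((δ:ℂ)*Complex.I)*Complex.exp ((α:ℂ)*Complex.I)*Complex.exp ((γ:ℂ)*Complex.I) + Complex.exp ((δ:ℂ)*Complex.I)*Complex.exp ((α:ℂ)*Complex.I)*Complex.exp (2*(t:ℂ)*Complex.I)*Complex.exp ((γ:ℂ)*Complex.I)) * hsq + (((2⁻¹:ℂ) + 2⁻¹*Complex.exp (2*(t:ℂ)*Complex.I)) * Complex.exp ((γ:ℂ)*Complex.I)) * hE

lemma conj_exp_real_mul_I (x : ℝ) :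
    (starRingEnd ℂ) (Complex.exp ((x:ℂ)*Complex.I)) = Complex.exp (((-x:ℝ):ℂ)*Complex.I) := by
  rw [← Complex.exp_conj, map_mul, Complex.conj_ofReal, Complex.conj_I]
  push_cast
  ring_nf

lemma exp_neg_cancel (x : ℝ) :
    Complex.exp ((x:ℂ)*Complex.I) * Complex.exp (((-x:ℝ):ℂ)*Complex.I) = 1 := by
  rw [← Complex.exp_add]; push_cast; ring_nf; simp

lemma exp_pi_div_two : Complex.exp (((Real.pi/2 : ℝ):ℂ) * Complex.I) = Complex.I := by
  rw [Complex.exp_mul_I, ← Complex.ofReal_cos, ← Complex.ofReal_sin]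
  simp

/-- Every 2×2 unitary `U` can be written as `e^{iδ} · D(α) · H · D(β) · H · D(γ)`. -/
theorem unitary_decomposition (U : Matrix (Fin 2) (Fin 2) ℂ)
    (hU : U ∈ Matrix.unitaryGroup (Fin 2) ℂ) :
    ∃ δ α β γ : ℝ,
      U = Complex.exp (δ * Complex.I) • (Dgate α * Hgate * Dgate β * Hgate * Dgate γ) := by
  have hUU := Matrix.mem_unitaryGroup_iff.mp hU
  have hUU' := Matrix.mem_unitaryGroup_iff'.mp hU
  have h1 := congrFun (congrFun hUU 0) 0
  have h2 := congrFun (congrFun hUU' 0) 0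
  have h3 := congrFun (congrFun hUU' 0) 1
  have h4 := congrFun (congrFun hUU' 1) 1
  simp [Matrix.mul_apply, Fin.sum_univ_two, Matrix.one_apply, Matrix.star_apply] at h1 h2 h3 h4
  set a := U 0 0 with ha
  set b := U 0 1 with hb
  set c' := U 1 0 with hc'
  set d := U 1 1 with hd
  set c : ℝ := ‖a‖ with hcdef
  set s : ℝ := ‖b‖ with hsdef
  have m1 : Complex.normSq a + Complex.normSq b = 1 := by
    exact_mod_cast (by rw [← Complex.mul_conj, ← Complex.mul_conj]; exact h1 :
      ((Complex.normSq a : ℂ) + Complex.normSq b = 1))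
  have m2 : Complex.normSq a + Complex.normSq c' = 1 := by
    exact_mod_cast (by rw [← Complex.mul_conj, ← Complex.mul_conj]; linear_combination h2 :
      ((Complex.normSq a : ℂ) + Complex.normSq c' = 1))
  have m4 : Complex.normSq b + Complex.normSq d = 1 := by
    exact_mod_cast (by rw [← Complex.mul_conj, ← Complex.mul_conj]; linear_combination h4 :
      ((Complex.normSq b : ℂ) + Complex.normSq d = 1))
  have n1 : c^2 + s^2 = 1 := by
    rw [hcdef, hsdef, Complex.sq_norm, Complex.sq_norm]; exact m1
  have hs0 : 0 ≤ s := norm_nonneg b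
  have hc0 : 0 ≤ c := norm_nonneg a
  have habsc' : ‖c'‖ = s := by
    have key : ‖c'‖^2 = s^2 := by
      rw [Complex.sq_norm]
      have : Complex.normSq c' = 1 - Complex.normSq a := by linarith
      rw [this, ← Complex.sq_norm a, ← hcdef]; nlinarith
    have h := norm_nonneg c'
    nlinarith
  have habsd : ‖d‖ = c := by
    have key : ‖d‖^2 = c^2 := by
      rw [Complex.sq_norm]
      have : Complex.normSq d = 1 - Complex.normSq b := by linarith
      rw [this, ← Complex.sq_norm b, ← hsdef]; nlinarith
    have h := norm_nonneg d
    nlinarith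
  set t : ℝ := Real.arcsin s with htdef
  have hsin : Real.sin t = s := Real.sin_arcsin (by linarith) (by nlinarith)
  have hcos : Real.cos t = c := by
    rw [htdef, Real.cos_arcsin, show 1 - s^2 = c^2 by linarith, Real.sqrt_sq hc0]
  by_cases hs : s = 0
  · have hb0 : b = 0 := norm_eq_zero.mp (by rw [← hsdef]; exact hs)
    have hcsq : c^2 = 1 := by nlinarith
    have hcc : c = 1 := by
      have h := Real.sqrt_sq hc0
      rw [hcsq, Real.sqrt_one] at h; exact h.symm
    have hc'0 : c' = 0 := norm_eq_zero.mp (by rw [habsc']; exact hs)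
    have habsd1 : ‖d‖ = 1 := by rw [habsd, hcc]
    refine ⟨Complex.arg a, 0, 2*0, Complex.arg d - Complex.arg a, ?_⟩
    rw [prod_eq]
    ext i j
    fin_cases i <;> fin_cases j <;> simp [← ha, ← hb, ← hc', ← hd, hb0, hc'0]
    · conv_lhs => rw [← Complex.norm_mul_exp_arg_mul_I a]
      rw [← hcdef, hcc, Complex.ofReal_one, one_mul]
    · conv_lhs => rw [← Complex.norm_mul_exp_arg_mul_I d]
      rw [habsd1, Complex.ofReal_one, one_mul]
  · have hs' : ((s:ℝ):ℂ) ≠ 0 := by exact_mod_cast hs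
    have f1 : ((c:ℝ):ℂ) * Complex.exp ((Complex.arg a :ℂ) * Complex.I) = a := by
      rw [hcdef]; exact Complex.norm_mul_exp_arg_mul_I a
    have f2 : ((s:ℝ):ℂ) * Complex.exp ((Complex.arg b :ℂ) * Complex.I) = b := by
      rw [hsdef]; exact Complex.norm_mul_exp_arg_mul_I b
    have f3 : ((s:ℝ):ℂ) * Complex.exp ((Complex.arg c' :ℂ) * Complex.I) = c' := by
      rw [← habsc']; exact Complex.norm_mul_exp_arg_mul_I c'
    have f7 : Complex.exp ((Complex.arg a:ℂ)*Complex.I) * Complex.exp (((-Complex.arg a:ℝ):ℂ)*Complex.I) = 1 := exp_neg_cancel _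
    have hconj : (starRingEnd ℂ) a = ((c:ℝ):ℂ) * Complex.exp (((-Complex.arg a:ℝ):ℂ)*Complex.I) := by
      conv_lhs => rw [← f1]
      rw [map_mul, Complex.conj_ofReal, conj_exp_real_mul_I]
    refine ⟨Complex.arg a - t, Complex.arg c' + Real.pi/2 - Complex.arg a, 2*t,
      Complex.arg b + Real.pi/2 - Complex.arg a, ?_⟩
    rw [prod_eq]
    ext i j
    fin_cases i <;> fin_cases j <;> simp [← ha, ← hb, ← hc', ← hd]
    · rw [← Complex.ofReal_cos, hcos]
      conv_lhs => rw [← f1]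
      ring
    · rw [← Complex.ofReal_sin, hsin,
        show ((Complex.arg b:ℂ) + ↑Real.pi/2) = ((Complex.arg b:ℂ) + ((Real.pi/2:ℝ):ℂ)) by push_cast; ring,
        ← hexpadd, exp_pi_div_two]
      linear_combination (-1 : ℂ) * f2 + ((s:ℝ):ℂ) * Complex.exp ((Complex.arg b:ℂ)*Complex.I) * Complex.I_sq
    · rw [← Complex.ofReal_sin, hsin,
        show ((Complex.arg c':ℂ) + ↑Real.pi/2) = ((Complex.arg c':ℂ) + ((Real.pi/2:ℝ):ℂ)) by push_cast; ring,
        ← hexpadd, exp_pi_div_two]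
      linear_combination (-1 : ℂ) * f3 + ((s:ℝ):ℂ) * Complex.exp ((Complex.arg c':ℂ)*Complex.I) * Complex.I_sq
    · rw [← Complex.ofReal_cos, hcos]
      have E11 : Complex.exp (((Complex.arg c':ℂ) + ↑Real.pi/2 + ((Complex.arg b:ℂ) + ↑Real.pi/2 - (Complex.arg a:ℂ)))*Complex.I)
          = Complex.exp ((Complex.arg c':ℂ)*Complex.I) * Complex.I *
            (Complex.exp ((Complex.arg b:ℂ)*Complex.I) * Complex.I *
              Complex.exp (((-Complex.arg a:ℝ):ℂ)*Complex.I)) := by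
        rw [show ((Complex.arg c':ℂ) + ↑Real.pi/2 + ((Complex.arg b:ℂ) + ↑Real.pi/2 - (Complex.arg a:ℂ))) * Complex.I
            = (Complex.arg c':ℂ)*Complex.I + (((Real.pi/2:ℝ):ℂ)*Complex.I + ((Complex.arg b:ℂ)*Complex.I
              + (((Real.pi/2:ℝ):ℂ)*Complex.I + ((-Complex.arg a:ℝ):ℂ)*Complex.I))) by push_cast; ring,
          Complex.exp_add, Complex.exp_add, Complex.exp_add, Complex.exp_add, exp_pi_div_two]
        ring
      rw [E11]
      have f5' : c' * (starRingEnd ℂ) c' = ((s:ℝ):ℂ)^2 := by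
        rw [Complex.mul_conj, Complex.normSq_eq_norm_sq, habsc']
        push_cast
        ring
      have hd3 : d = -((starRingEnd ℂ) a * Complex.exp ((Complex.arg b:ℂ)*Complex.I) *
          Complex.exp ((Complex.arg c':ℂ)*Complex.I)) := by
        have hmul : ((s:ℝ):ℂ)^2 * d = ((s:ℝ):ℂ)^2 *
            -((starRingEnd ℂ) a * Complex.exp ((Complex.arg b:ℂ)*Complex.I) *
              Complex.exp ((Complex.arg c':ℂ)*Complex.I)) := by
          linear_combination c' * h3 - d * f5' + (starRingEnd ℂ) a * ((s:ℝ):ℂ) *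
            Complex.exp ((Complex.arg b:ℂ)*Complex.I) * f3 + (starRingEnd ℂ) a * c' * f2
        exact mul_left_cancel₀ (pow_ne_zero 2 hs') hmul
      linear_combination hd3 - Complex.exp ((Complex.arg b:ℂ)*Complex.I) *
          Complex.exp ((Complex.arg c':ℂ)*Complex.I) * hconj -
        Complex.exp ((Complex.arg b:ℂ)*Complex.I) * Complex.exp ((Complex.arg c':ℂ)*Complex.I) *
          Complex.exp (((-Complex.arg a:ℝ):ℂ)*Complex.I) * ((c:ℝ):ℂ) * Complex.I_sq
end

section
/- For every real φ with 0 ≤ φ ≤ π/2 and every natural number k, there exists a unit vector v = (v₀, v₁, v₂, v₃) ∈ ℂ⁴ such that: (1) 2^k·vⱼ is a Gaussian integer (an element of ℤ[i]) for each j; (2) v₁ = 0; and (3) ‖v − e^{iφ}·e₀‖ ≤ √5 · 2^{−k/2}, where e₀ = (1,0,0,0) and ‖·‖ is the Euclidean norm on ℂ⁴. -/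
set_option maxHeartbeats 1000000 in
/-- For `0 ≤ φ ≤ π/2` and `k : ℕ`, there is a unit vector `v ∈ ℂ⁴` whose entries, scaled by
`2^k`, are Gaussian integers, whose second entry vanishes, and with
`‖v − e^{iφ}·e₀‖ ≤ √5 · 2^{−k/2}`. -/
theorem exists_good_approx_vector (φ : ℝ) (k : ℕ) (h0 : 0 ≤ φ) (h1 : φ ≤ Real.pi / 2) :
    ∃ v : EuclideanSpace ℂ (Fin 4),
      ‖v‖ = 1 ∧
      (∀ j : Fin 4, ∃ a b : ℤ, (2 : ℂ) ^ k * v j = (a : ℂ) + (b : ℂ) * Complex.I) ∧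
      v 1 = 0 ∧
      ‖v - Complex.exp (φ * Complex.I) • EuclideanSpace.single (0 : Fin 4) (1 : ℂ)‖
        ≤ Real.sqrt 5 * (2 : ℝ) ^ (-(k : ℝ) / 2) := by
  have hpi : 0 < Real.pi := Real.pi_pos
  set C := Real.cos φ with hCdef
  set S := Real.sin φ with hSdef
  have hC0 : 0 ≤ C := Real.cos_nonneg_of_mem_Icc ⟨by linarith, h1⟩
  have hS0 : 0 ≤ S := Real.sin_nonneg_of_nonneg_of_le_pi h0 (by linarith)
  have hC1 : C ≤ 1 := Real.cos_le_one φ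
  have hS1 : S ≤ 1 := Real.sin_le_one φ
  have pyth : S ^ 2 + C ^ 2 = 1 := Real.sin_sq_add_cos_sq φ
  set r : ℝ := (2 : ℝ) ^ k with hrdef
  have hr0 : (0 : ℝ) < r := by positivity
  have hr1 : (1 : ℝ) ≤ r := one_le_pow₀ (by norm_num)
  set cn : ℕ := ⌊r * C⌋₊ with hcn
  set sn : ℕ := ⌊r * S⌋₊ with hsn
  have hc1 : (cn : ℝ) ≤ r * C := Nat.floor_le (by positivity)
  have hc2 : r * C < cn + 1 := Nat.lt_floor_add_one _
  have hs1 : (sn : ℝ) ≤ r * S := Nat.floor_le (by positivity)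
  have hs2 : r * S < sn + 1 := Nat.lt_floor_add_one _
  have hr4 : ((4 ^ k : ℕ) : ℝ) = r ^ 2 := by
    push_cast
    rw [hrdef, ← pow_mul, mul_comm, pow_mul]
    norm_num
  have hcs : cn ^ 2 + sn ^ 2 ≤ 4 ^ k := by
    have hre : (cn : ℝ) ^ 2 + (sn : ℝ) ^ 2 ≤ r ^ 2 := by
      nlinarith [Nat.cast_nonneg (α := ℝ) cn, Nat.cast_nonneg (α := ℝ) sn, hr0.le]
    have := hr4 ▸ hre
    exact_mod_cast this
  set m : ℕ := 4 ^ k - cn ^ 2 - sn ^ 2 with hmdef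
  have hmnat : m + (cn ^ 2 + sn ^ 2) = 4 ^ k := by omega
  have hm : (m : ℝ) = r ^ 2 - (cn : ℝ) ^ 2 - (sn : ℝ) ^ 2 := by
    have h4' : (4 : ℝ) ^ k = r ^ 2 := by
      rw [hrdef, ← pow_mul, mul_comm, pow_mul]; norm_num
    have := congrArg (Nat.cast : ℕ → ℝ) hmnat
    push_cast at this
    rw [h4'] at this
    linarith
  obtain ⟨a, b, c2, d2, habcd⟩ := Nat.sum_four_squares m
  have habcdR : (a : ℝ) ^ 2 + (b : ℝ) ^ 2 + (c2 : ℝ) ^ 2 + (d2 : ℝ) ^ 2 = (m : ℝ) := by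
    exact_mod_cast congrArg (Nat.cast : ℕ → ℝ) habcd
  clear_value C S r cn sn m
  set z0 : ℂ := ((cn / r : ℝ) : ℂ) + ((sn / r : ℝ) : ℂ) * Complex.I with hz0
  set z2 : ℂ := ((a / r : ℝ) : ℂ) + ((b / r : ℝ) : ℂ) * Complex.I with hz2
  set z3 : ℂ := ((c2 / r : ℝ) : ℂ) + ((d2 / r : ℝ) : ℂ) * Complex.I with hz3
  have hnorm : ∀ x y : ℝ, ‖(x : ℂ) + (y : ℂ) * Complex.I‖ ^ 2 = x ^ 2 + y ^ 2 := by
    intro x y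
    rw [Complex.sq_norm, Complex.normSq_apply]
    simp
    ring
  have h2r : ((2 : ℂ) ^ k) = ((r : ℝ) : ℂ) := by rw [hrdef]; push_cast; ring
  have hrC0 : ((r : ℝ) : ℂ) ≠ 0 := by exact_mod_cast hr0.ne'
  have hmul : ∀ x y : ℝ, (2 : ℂ) ^ k * (((x / r : ℝ) : ℂ) + ((y / r : ℝ) : ℂ) * Complex.I)
      = ((x : ℝ) : ℂ) + ((y : ℝ) : ℂ) * Complex.I := by
    intro x y
    rw [h2r]
    push_cast
    field_simp
  refine ⟨WithLp.toLp 2 ![z0, 0, z2, z3], ?_, ?_, ?_, ?_⟩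
  · -- norm = 1
    rw [EuclideanSpace.norm_eq, Fin.sum_univ_four]
    have e0 : (WithLp.toLp 2 ![z0, 0, z2, z3] : EuclideanSpace ℂ (Fin 4)) 0 = z0 := rfl
    have e1 : (WithLp.toLp 2 ![z0, 0, z2, z3] : EuclideanSpace ℂ (Fin 4)) 1 = 0 := rfl
    have e2 : (WithLp.toLp 2 ![z0, 0, z2, z3] : EuclideanSpace ℂ (Fin 4)) 2 = z2 := rfl
    have e3 : (WithLp.toLp 2 ![z0, 0, z2, z3] : EuclideanSpace ℂ (Fin 4)) 3 = z3 := rfl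
    rw [e0, e1, e2, e3, hz0, hz2, hz3, hnorm, hnorm, hnorm, norm_zero]
    have : (cn / r) ^ 2 + (sn / r) ^ 2 + 0 ^ 2 + ((a / r) ^ 2 + (b / r) ^ 2)
        + ((c2 / r) ^ 2 + (d2 / r) ^ 2) = 1 := by
      have hK : (cn : ℝ) ^ 2 + (sn : ℝ) ^ 2 +
          ((a : ℝ) ^ 2 + (b : ℝ) ^ 2 + (c2 : ℝ) ^ 2 + (d2 : ℝ) ^ 2) = r ^ 2 := by
        rw [habcdR]; linarith [hm]
      field_simp
      linarith [hK]
    rw [this, Real.sqrt_one]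
  · -- Gaussian integers
    intro j
    fin_cases j
    · refine ⟨cn, sn, ?_⟩
      show (2 : ℂ) ^ k * z0 = _
      rw [hz0, hmul cn sn]; push_cast; ring
    · exact ⟨0, 0, by simp⟩
    · refine ⟨a, b, ?_⟩
      show (2 : ℂ) ^ k * z2 = _
      rw [hz2, hmul a b]; push_cast; ring
    · refine ⟨c2, d2, ?_⟩
      show (2 : ℂ) ^ k * z3 = _
      rw [hz3, hmul c2 d2]; push_cast; ring
  · rfl
  · -- distance bound
    have he : Complex.exp (φ * Complex.I) = ((C : ℝ) : ℂ) + ((S : ℝ) : ℂ) * Complex.I := by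
      rw [Complex.exp_mul_I, hCdef, hSdef, Complex.ofReal_cos, Complex.ofReal_sin]
    have key : (r * C - cn) ^ 2 + (r * S - sn) ^ 2 + (m : ℝ) ≤ 4 * r := by
      nlinarith [mul_nonneg (mul_nonneg hr0.le hC0) (by linarith : (0:ℝ) ≤ 1 - (r * C - cn)),
        mul_nonneg (mul_nonneg hr0.le hS0) (by linarith : (0:ℝ) ≤ 1 - (r * S - sn)),
        mul_nonneg hr0.le (by linarith : (0:ℝ) ≤ 1 - C),
        mul_nonneg hr0.le (by linarith : (0:ℝ) ≤ 1 - S)]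
    have hrhs : Real.sqrt 5 * (2 : ℝ) ^ (-(k : ℝ) / 2) = Real.sqrt (5 / r) := by
      rw [show (-(k : ℝ) / 2) = (-(k : ℝ)) * (1 / 2) by ring,
        Real.rpow_mul (by norm_num), ← Real.sqrt_eq_rpow,
        ← Real.sqrt_mul (by norm_num)]
      congr 1
      rw [Real.rpow_neg (by norm_num), Real.rpow_natCast, hrdef]
      rw [div_eq_mul_inv]
    rw [hrhs, EuclideanSpace.norm_eq, Fin.sum_univ_four]
    simp only [PiLp.toLp_apply, PiLp.sub_apply, PiLp.smul_apply, EuclideanSpace.single_apply,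
      Matrix.cons_val_zero, Matrix.cons_val_one, Matrix.head_cons,
      Matrix.cons_val_two, Matrix.tail_cons, Matrix.cons_val_three,
      smul_eq_mul, mul_one, mul_zero, sub_zero, if_true, eq_self_iff_true,
      Fin.reduceEq, reduceIte]
    have hz0e : z0 - Complex.exp ((φ : ℂ) * Complex.I)
        = ((↑cn / r - C : ℝ) : ℂ) + ((↑sn / r - S : ℝ) : ℂ) * Complex.I := by
      rw [he, hz0]; push_cast; ring
    rw [hz0e, hz2, hz3, hnorm, hnorm, hnorm, norm_zero]
    apply Real.sqrt_le_sqrt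
    have hsum : (↑cn / r - C) ^ 2 + (↑sn / r - S) ^ 2 + 0 ^ 2 + ((↑a / r) ^ 2 + (↑b / r) ^ 2)
        + ((↑c2 / r) ^ 2 + (↑d2 / r) ^ 2)
        = ((r * C - ↑cn) ^ 2 + (r * S - ↑sn) ^ 2 + (m : ℝ)) / r ^ 2 := by
      rw [← habcdR]
      field_simp
      ring
    rw [hsum, div_le_div_iff₀ (by positivity) hr0]
    nlinarith [mul_le_mul_of_nonneg_right key hr0.le]
end

section
/- Let n, m be natural numbers, N = 2^n, and let μ be the Haar (probability or invariant) measure on the unitary group U(N). For V ∈ U(N) define M_V = { W ∈ U(2^{m+n}) : W(|0⟩ ⊗ |φ⟩) = |0⟩ ⊗ V|φ⟩ for all |φ⟩ ∈ ℂ^N }, and for U ∈ U(2^{m+n}) and ε > 0 define the volume v(U, ε) = μ{ V ∈ U(N) : ρ(M_V, U) ≤ ε }, where ρ(M_V, U) = inf_{W ∈ M_V} ‖U − W‖_F. Then for every U ∈ U(2^{m+n}) and ε > 0, v(U, ε) ≤ μ{ V ∈ U(N) : ‖I − V‖_F < 2ε }. -/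
set_option maxHeartbeats 1000000


open MeasureTheory Matrix

/-- The (Borel) product measurable structure on complex matrices. -/
noncomputable instance matrixMeasurableSpace {I J : Type*} : MeasurableSpace (Matrix I J ℂ) :=
  MeasurableSpace.pi

/-- The Frobenius norm `‖A‖_F = √(Σ_{i,j} |A_{ij}|²)` of a complex matrix. -/
noncomputable def frobNorm {I J : Type*} [Fintype I] [Fintype J] (A : Matrix I J ℂ) : ℝ :=
  Real.sqrt (∑ i, ∑ j, ‖A i j‖ ^ 2)

/-- The embedding `|φ⟩ ↦ |0⟩ ⊗ |φ⟩` of `ℂ^(2^n)` into `ℂ^(2^m) ⊗ ℂ^(2^n)`. -/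
def withAncilla (m n : ℕ) (ψ : Fin (2 ^ n) → ℂ) : Fin (2 ^ m) × Fin (2 ^ n) → ℂ :=
  fun p => if p.1 = ⟨0, Nat.two_pow_pos m⟩ then ψ p.2 else 0

/-- `M_V`: the set of unitaries on `m + n` qubits that simulate the `n`-qubit unitary `V` using
`m` ancillary qubits initialized to `|0⟩`. -/
def simSet (n m : ℕ) (V : Matrix.unitaryGroup (Fin (2 ^ n)) ℂ) :
    Set (Matrix (Fin (2 ^ m) × Fin (2 ^ n)) (Fin (2 ^ m) × Fin (2 ^ n)) ℂ) :=
  {W | W ∈ Matrix.unitaryGroup (Fin (2 ^ m) × Fin (2 ^ n)) ℂ ∧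
    ∀ ψ : Fin (2 ^ n) → ℂ, W *ᵥ withAncilla m n ψ = withAncilla m n ((V : Matrix _ _ ℂ) *ᵥ ψ)}

/-- `ρ(M_V, U) = inf_{W ∈ M_V} ‖U − W‖_F`. -/
noncomputable def rhoSim (n m : ℕ) (V : Matrix.unitaryGroup (Fin (2 ^ n)) ℂ)
    (U : Matrix (Fin (2 ^ m) × Fin (2 ^ n)) (Fin (2 ^ m) × Fin (2 ^ n)) ℂ) : ℝ :=
  sInf {d : ℝ | ∃ W ∈ simSet n m V, d = frobNorm (U - W)}

namespace VolAux

variable {ι κ : Type*} [Fintype ι] [Fintype κ]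

noncomputable def frobSq (A : Matrix ι κ ℂ) : ℝ := ∑ i, ∑ j, ‖A i j‖ ^ 2

lemma frobSq_nonneg (A : Matrix ι κ ℂ) : 0 ≤ frobSq A := by
  apply Finset.sum_nonneg; intro i _; apply Finset.sum_nonneg; intro j _; positivity

lemma frobNorm_eq (A : Matrix ι κ ℂ) : frobNorm A = Real.sqrt (frobSq A) := rfl

lemma frobSq_eq_trace (A : Matrix ι κ ℂ) : frobSq A = ((Aᴴ * A).trace).re := by
  rw [Matrix.trace, Complex.re_sum]
  rw [frobSq, Finset.sum_comm]
  refine Finset.sum_congr rfl fun j _ => ?_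
  rw [Matrix.diag_apply, Matrix.mul_apply, Complex.re_sum]
  refine Finset.sum_congr rfl fun i _ => ?_
  rw [Matrix.conjTranspose_apply, Complex.sq_norm]
  simp [Complex.normSq_apply, Complex.star_def, Complex.mul_re]

lemma frobSq_mul_of [DecidableEq ι] {A : Matrix ι ι ℂ} (hA : Aᴴ * A = 1) (B : Matrix ι κ ℂ) :
    frobSq (A * B) = frobSq B := by
  rw [frobSq_eq_trace, frobSq_eq_trace, Matrix.conjTranspose_mul, Matrix.mul_assoc,
    ← Matrix.mul_assoc Aᴴ A B, hA, Matrix.one_mul]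

lemma frobSq_unitary [DecidableEq ι] {A : Matrix ι ι ℂ} (hA : Aᴴ * A = 1) :
    frobSq A = Fintype.card ι := by
  rw [frobSq_eq_trace, hA, Matrix.trace_one]
  simp

lemma frobNorm_unitary [DecidableEq ι] {A : Matrix ι ι ℂ} (hA : Aᴴ * A = 1) :
    frobNorm A = Real.sqrt (Fintype.card ι) := by
  rw [frobNorm_eq, frobSq_unitary hA]

noncomputable def toE (A : Matrix ι κ ℂ) : EuclideanSpace ℂ (ι × κ) :=
  (WithLp.equiv 2 _).symm fun p => A p.1 p.2

lemma toE_sub (A B : Matrix ι κ ℂ) : toE (A - B) = toE A - toE B := rfl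

lemma norm_toE (A : Matrix ι κ ℂ) : ‖toE A‖ = frobNorm A := by
  rw [EuclideanSpace.norm_eq, Fintype.sum_prod_type, frobNorm]
  rfl


lemma core {E : Type*} [NormedAddCommGroup E] [InnerProductSpace ℂ E]
    (u w w' : E) {r c Y : ℝ}
    (hu : ‖u‖ = r) (hw : ‖w‖ = r) (hw' : ‖w'‖ = r)
    (h1 : ‖u - w‖ ≤ c) (h2 : ‖u - w'‖ ≤ c)
    (hY0 : 0 ≤ Y) (hYX : Y ≤ ‖w - w'‖) :
    Y ^ 2 + (2 * r - Real.sqrt (4 * r ^ 2 - Y ^ 2)) ^ 2 ≤ 4 * c ^ 2 := by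
  have hr : 0 ≤ r := hu ▸ norm_nonneg u
  have hc : 0 ≤ c := le_trans (norm_nonneg _) h1
  set X := ‖w - w'‖ with hX
  set s := ‖w + w'‖ with hs
  have hpar1 : s ^ 2 + X ^ 2 = 4 * r ^ 2 := by
    have h := parallelogram_law_with_norm ℂ w w'
    rw [hw, hw'] at h
    nlinarith [h]
  have hs2r : s ≤ 2 * r := by
    calc s ≤ ‖w‖ + ‖w'‖ := norm_add_le _ _
    _ = 2 * r := by rw [hw, hw']; ring
  have hpar2 := parallelogram_law_with_norm ℂ (u - w) (u - w')
  have hXX : ‖(u - w) - (u - w')‖ = X := by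
    rw [show (u - w) - (u - w') = w' - w by abel, norm_sub_rev]
  rw [hXX] at hpar2
  have hsum : ‖(u - w) + (u - w')‖ ^ 2 + X ^ 2 ≤ 4 * c ^ 2 := by
    nlinarith [hpar2, h1, h2, norm_nonneg (u - w), norm_nonneg (u - w')]
  have h2us : 2 * r - s ≤ ‖(u - w) + (u - w')‖ := by
    have huu : ‖u + u‖ = 2 * r := by
      rw [show u + u = (2 : ℝ) • u by rw [two_smul], norm_smul, hu]
      simp
    have h' : ‖u + u‖ - ‖w + w'‖ ≤ ‖(u + u) - (w + w')‖ := norm_sub_norm_le _ _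
    rw [show (u + u) - (w + w') = (u - w) + (u - w') by abel] at h'
    linarith [h', huu.symm ▸ h']
  have hgs : 0 ≤ 2 * r - s := by linarith
  have hkey : X ^ 2 + (2 * r - s) ^ 2 ≤ 4 * c ^ 2 := by
    nlinarith [hsum, h2us, hgs, norm_nonneg ((u - w) + (u - w'))]
  have hXY : Y ^ 2 ≤ X ^ 2 := by nlinarith [hYX, hY0]
  have hs0 : 0 ≤ s := norm_nonneg _
  have hsle : s ≤ Real.sqrt (4 * r ^ 2 - Y ^ 2) := by
    have h3 : s ^ 2 ≤ 4 * r ^ 2 - Y ^ 2 := by linarith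
    calc s = Real.sqrt (s ^ 2) := (Real.sqrt_sq hs0).symm
    _ ≤ _ := Real.sqrt_le_sqrt h3
  have hsq2 : Real.sqrt (4 * r ^ 2 - Y ^ 2) ≤ 2 * r := by
    calc Real.sqrt (4 * r ^ 2 - Y ^ 2) ≤ Real.sqrt ((2 * r) ^ 2) :=
      Real.sqrt_le_sqrt (by nlinarith [sq_nonneg Y])
    _ = 2 * r := Real.sqrt_sq (by linarith)
  have hfin : (2 * r - Real.sqrt (4 * r ^ 2 - Y ^ 2)) ^ 2 ≤ (2 * r - s) ^ 2 := by
    nlinarith [hsle, hsq2, hgs]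
  linarith

lemma conclude {Y r ε : ℝ} (hY0 : 0 ≤ Y) (hY2r : Y ≤ 2 * r) (hε : 0 < ε)
    (h : ∀ δ : ℝ, 0 < δ →
      Y ^ 2 + (2 * r - Real.sqrt (4 * r ^ 2 - Y ^ 2)) ^ 2 ≤ 4 * (ε + δ) ^ 2) :
    Y < 2 * ε := by
  set g := (2 * r - Real.sqrt (4 * r ^ 2 - Y ^ 2)) ^ 2 with hg
  have hr : 0 ≤ r := by linarith
  have hle : Y ^ 2 + g ≤ 4 * ε ^ 2 := by
    by_contra hcon
    push_neg at hcon
    set η := Y ^ 2 + g - 4 * ε ^ 2 with hη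
    have hη0 : 0 < η := by linarith
    have hden : (0 : ℝ) < 8 * ε + 8 := by linarith
    set δ := min 1 (η / (8 * ε + 8)) with hδ
    have hδ0 : 0 < δ := lt_min one_pos (div_pos hη0 hden)
    have hδ1 : δ ≤ 1 := min_le_left _ _
    have hδ2 : δ * (8 * ε + 8) ≤ η := by
      have := min_le_right 1 (η / (8 * ε + 8))
      calc δ * (8 * ε + 8) ≤ (η / (8 * ε + 8)) * (8 * ε + 8) := by
            apply mul_le_mul_of_nonneg_right this (le_of_lt hden)
      _ = η := by field_simp
    have hd := h δ hδ0
    nlinarith [hd, hδ0, hδ1, hδ2]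
  rcases eq_or_lt_of_le hY0 with h0 | hYpos
  · rw [← h0]; linarith
  · have h3 : 0 ≤ 4 * r ^ 2 - Y ^ 2 := by nlinarith
    have h1 : Real.sqrt (4 * r ^ 2 - Y ^ 2) < 2 * r := by
      calc Real.sqrt (4 * r ^ 2 - Y ^ 2) < Real.sqrt ((2 * r) ^ 2) :=
        Real.sqrt_lt_sqrt h3 (by nlinarith)
      _ = 2 * r := Real.sqrt_sq (by linarith)
    have hgpos : 0 < g := by
      have hb : 0 < 2 * r - Real.sqrt (4 * r ^ 2 - Y ^ 2) := by linarith
      exact pow_pos hb 2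
    have hY2 : Y ^ 2 < (2 * ε) ^ 2 := by nlinarith
    exact lt_of_pow_lt_pow_left₀ 2 (by linarith) hY2

end VolAux

namespace VolAux

lemma simSet_nonempty (n m : ℕ) (V : Matrix.unitaryGroup (Fin (2 ^ n)) ℂ) :
    ∃ W, W ∈ simSet n m V := by
  set A : Matrix (Fin (2 ^ n)) (Fin (2 ^ n)) ℂ := (V : Matrix (Fin (2 ^ n)) (Fin (2 ^ n)) ℂ)
    with hA
  refine ⟨Matrix.kroneckerMap (· * ·) (1 : Matrix (Fin (2 ^ m)) (Fin (2 ^ m)) ℂ) A, ?_, ?_⟩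
  · rw [Matrix.mem_unitaryGroup_iff]
    have hV : A * star A = 1 := Matrix.mem_unitaryGroup_iff.mp V.2
    have hconj : star (Matrix.kroneckerMap (· * ·)
        (1 : Matrix (Fin (2 ^ m)) (Fin (2 ^ m)) ℂ) A) =
        Matrix.kroneckerMap (· * ·) (1 : Matrix (Fin (2 ^ m)) (Fin (2 ^ m)) ℂ) (star A) := by
      ext p q
      simp only [Matrix.star_apply, Matrix.kroneckerMap_apply, Matrix.one_apply, star_mul']
      by_cases h : q.1 = p.1
      · simp [h, eq_comm, mul_comm]
      · simp [h, Ne.symm h]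
    rw [hconj, ← Matrix.mul_kronecker_mul, hV, Matrix.one_mul, Matrix.one_kronecker_one]
  · intro ψ
    funext p
    simp only [Matrix.mulVec, dotProduct]
    rw [Fintype.sum_prod_type, Finset.sum_comm]
    simp only [Matrix.kroneckerMap_apply, Matrix.one_apply, withAncilla, ite_mul, one_mul,
      zero_mul, mul_ite, mul_zero, Finset.sum_ite_eq, Finset.mem_univ, if_true]
    by_cases hz : p.1 = ⟨0, Nat.two_pow_pos m⟩ <;> simp [hz, hA, Matrix.mulVec, dotProduct]

lemma frob_sub_le {n m : ℕ} (V V' : Matrix.unitaryGroup (Fin (2 ^ n)) ℂ)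
    {W W' : Matrix (Fin (2 ^ m) × Fin (2 ^ n)) (Fin (2 ^ m) × Fin (2 ^ n)) ℂ}
    (hW : W ∈ simSet n m V) (hW' : W' ∈ simSet n m V') :
    frobNorm ((V : Matrix (Fin (2 ^ n)) (Fin (2 ^ n)) ℂ)
      - (V' : Matrix (Fin (2 ^ n)) (Fin (2 ^ n)) ℂ)) ≤ frobNorm (W - W') := by
  set D : Matrix (Fin (2 ^ n)) (Fin (2 ^ n)) ℂ :=
    (V : Matrix (Fin (2 ^ n)) (Fin (2 ^ n)) ℂ) - (V' : Matrix (Fin (2 ^ n)) (Fin (2 ^ n)) ℂ)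
    with hD
  set F : Matrix (Fin (2 ^ m) × Fin (2 ^ n)) (Fin (2 ^ m) × Fin (2 ^ n)) ℂ := W - W' with hF
  rw [frobNorm_eq, frobNorm_eq]
  apply Real.sqrt_le_sqrt
  set z : Fin (2 ^ m) := ⟨0, Nat.two_pow_pos m⟩ with hz
  have hdiff : ∀ ψ, F *ᵥ withAncilla m n ψ = withAncilla m n (D *ᵥ ψ) := by
    intro ψ
    rw [hF, hD, Matrix.sub_mulVec, hW.2, hW'.2, Matrix.sub_mulVec]
    funext p
    simp only [withAncilla, Pi.sub_apply]
    split <;> simp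
  have hsingle : ∀ j : Fin (2 ^ n),
      withAncilla m n (Pi.single j 1) = Pi.single (z, j) (1 : ℂ) := by
    intro j
    funext p
    rcases p with ⟨a, b⟩
    by_cases h : a = z
    · simp_all [withAncilla, Pi.single_apply, Prod.ext_iff]
    · simp_all [withAncilla, Pi.single_apply, Prod.ext_iff]
  have hentry : ∀ (j : Fin (2 ^ n)) (p : Fin (2 ^ m) × Fin (2 ^ n)),
      F p (z, j) = (if p.1 = z then D p.2 j else 0) := by
    intro j p
    have h := congrFun (hdiff (Pi.single j 1)) p
    rw [hsingle j, Matrix.mulVec_single_one] at h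
    simp only [Matrix.col, Matrix.transpose_apply] at h
    rw [h]
    simp [withAncilla, hz]
  have hterm : ∀ j : Fin (2 ^ n),
      ∑ p, ‖F p (z, j)‖ ^ 2 = ∑ i, ‖D i j‖ ^ 2 := by
    intro j
    rw [Fintype.sum_prod_type]
    rw [Finset.sum_eq_single z]
    · refine Finset.sum_congr rfl fun i _ => ?_
      rw [hentry j (z, i)]
      simp
    · intro a _ ha
      apply Finset.sum_eq_zero
      intro i _
      rw [hentry j (a, i)]
      simp [ha]
    · intro h; exact absurd (Finset.mem_univ _) h
  have e1 : frobSq D = ∑ j, ∑ i, ‖D i j‖ ^ 2 := Finset.sum_comm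
  have e2 : frobSq F = ∑ q : Fin (2 ^ m) × Fin (2 ^ n), ∑ p, ‖F p q‖ ^ 2 :=
    Finset.sum_comm
  rw [e1, e2, Fintype.sum_prod_type (f := fun q : Fin (2 ^ m) × Fin (2 ^ n) =>
    ∑ p, ‖F p q‖ ^ 2)]
  calc ∑ j, ∑ i, ‖D i j‖ ^ 2
      = ∑ j, ∑ p, ‖F p (z, j)‖ ^ 2 :=
        Finset.sum_congr rfl fun j _ => (hterm j).symm
    _ ≤ ∑ a, ∑ j, ∑ p, ‖F p (a, j)‖ ^ 2 := by
        apply Finset.single_le_sum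
          (f := fun a => ∑ j, ∑ p, ‖F p (a, j)‖ ^ 2)
        · intro a _
          apply Finset.sum_nonneg; intro j _
          apply Finset.sum_nonneg; intro p _
          positivity
        · exact Finset.mem_univ z

end VolAux

/-- For an invariant (Haar) measure `μ` on `U(2^n)`, the volume
`v(U, ε) = μ{V : ρ(M_V, U) ≤ ε}` is at most `μ{V : ‖I − V‖_F < 2ε}`. -/
theorem volume_le_ball_volume (n m : ℕ)
    (μ : Measure (Matrix.unitaryGroup (Fin (2 ^ n)) ℂ)) [μ.IsMulLeftInvariant]
    (U : Matrix (Fin (2 ^ m) × Fin (2 ^ n)) (Fin (2 ^ m) × Fin (2 ^ n)) ℂ)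
    (hU : U ∈ Matrix.unitaryGroup (Fin (2 ^ m) × Fin (2 ^ n)) ℂ)
    (ε : ℝ) (hε : 0 < ε) :
    μ {V : Matrix.unitaryGroup (Fin (2 ^ n)) ℂ | rhoSim n m V U ≤ ε}
      ≤ μ {V : Matrix.unitaryGroup (Fin (2 ^ n)) ℂ |
            frobNorm (1 - (V : Matrix (Fin (2 ^ n)) (Fin (2 ^ n)) ℂ)) < 2 * ε} := by
  classical
  set S := {V : Matrix.unitaryGroup (Fin (2 ^ n)) ℂ | rhoSim n m V U ≤ ε} with hS
  set B := {V : Matrix.unitaryGroup (Fin (2 ^ n)) ℂ |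
      frobNorm (1 - (V : Matrix (Fin (2 ^ n)) (Fin (2 ^ n)) ℂ)) < 2 * ε} with hB
  rcases Set.eq_empty_or_nonempty S with hemp | ⟨V₀, hV₀⟩
  · rw [hemp]; simp
  · have hUu : Uᴴ * U = 1 := by
      have h := Matrix.mem_unitaryGroup_iff'.mp hU
      rwa [Matrix.star_eq_conjTranspose] at h
    set r : ℝ := Real.sqrt (Fintype.card (Fin (2 ^ m) × Fin (2 ^ n))) with hr
    have unit_norm : ∀ {W : Matrix (Fin (2 ^ m) × Fin (2 ^ n)) (Fin (2 ^ m) × Fin (2 ^ n)) ℂ},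
        W ∈ Matrix.unitaryGroup (Fin (2 ^ m) × Fin (2 ^ n)) ℂ → frobNorm W = r := by
      intro W hW
      have h1 : Wᴴ * W = 1 := by
        have h := Matrix.mem_unitaryGroup_iff'.mp hW
        rwa [Matrix.star_eq_conjTranspose] at h
      rw [VolAux.frobNorm_unitary h1, hr]
    have key : ∀ V : Matrix.unitaryGroup (Fin (2 ^ n)) ℂ, V ∈ S →
        frobNorm ((V₀ : Matrix (Fin (2 ^ n)) (Fin (2 ^ n)) ℂ)
          - (V : Matrix (Fin (2 ^ n)) (Fin (2 ^ n)) ℂ)) < 2 * ε := by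
      intro V hV
      set Y := frobNorm ((V₀ : Matrix (Fin (2 ^ n)) (Fin (2 ^ n)) ℂ)
        - (V : Matrix (Fin (2 ^ n)) (Fin (2 ^ n)) ℂ)) with hY
      have hY0 : 0 ≤ Y := Real.sqrt_nonneg _
      obtain ⟨W1, hW1⟩ := VolAux.simSet_nonempty n m V₀
      obtain ⟨W2, hW2⟩ := VolAux.simSet_nonempty n m V
      have hY2r : Y ≤ 2 * r := by
        calc Y ≤ frobNorm (W1 - W2) := VolAux.frob_sub_le V₀ V hW1 hW2
        _ = ‖VolAux.toE W1 - VolAux.toE W2‖ := by rw [← VolAux.toE_sub, VolAux.norm_toE]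
        _ ≤ ‖VolAux.toE W1‖ + ‖VolAux.toE W2‖ := norm_sub_le _ _
        _ = 2 * r := by
            rw [VolAux.norm_toE, VolAux.norm_toE, unit_norm hW1.1, unit_norm hW2.1]; ring
      apply VolAux.conclude hY0 hY2r hε
      intro δ hδ
      have happrox : ∀ V' : Matrix.unitaryGroup (Fin (2 ^ n)) ℂ, V' ∈ S →
          ∃ W ∈ simSet n m V', frobNorm (U - W) ≤ ε + δ := by
        intro V' hV'
        have hne : {d : ℝ | ∃ W ∈ simSet n m V', d = frobNorm (U - W)}.Nonempty := by
          obtain ⟨W, hW⟩ := VolAux.simSet_nonempty n m V'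
          exact ⟨frobNorm (U - W), W, hW, rfl⟩
        obtain ⟨d, ⟨W, hWmem, rfl⟩, hd⟩ := Real.lt_sInf_add_pos hne hδ
        refine ⟨W, hWmem, le_of_lt (lt_of_lt_of_le hd ?_)⟩
        have hV'2 : rhoSim n m V' U ≤ ε := hV'
        rw [rhoSim] at hV'2
        linarith
      obtain ⟨Wa, hWa, hWad⟩ := happrox V₀ hV₀
      obtain ⟨Wb, hWb, hWbd⟩ := happrox V hV
      refine VolAux.core (VolAux.toE U) (VolAux.toE Wa) (VolAux.toE Wb) ?_ ?_ ?_ ?_ ?_ hY0 ?_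
      · rw [VolAux.norm_toE, unit_norm hU]
      · rw [VolAux.norm_toE, unit_norm hWa.1]
      · rw [VolAux.norm_toE, unit_norm hWb.1]
      · rw [← VolAux.toE_sub, VolAux.norm_toE]; exact hWad
      · rw [← VolAux.toE_sub, VolAux.norm_toE]; exact hWbd
      · rw [← VolAux.toE_sub, VolAux.norm_toE]; exact VolAux.frob_sub_le V₀ V hWa hWb
    have hsub : S ⊆ (fun V => V₀⁻¹ * V) ⁻¹' B := by
      intro V hV
      show frobNorm (1 - ((V₀⁻¹ * V : Matrix.unitaryGroup (Fin (2 ^ n)) ℂ) :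
        Matrix (Fin (2 ^ n)) (Fin (2 ^ n)) ℂ)) < 2 * ε
      have hco : ((V₀⁻¹ * V : Matrix.unitaryGroup (Fin (2 ^ n)) ℂ) :
          Matrix (Fin (2 ^ n)) (Fin (2 ^ n)) ℂ)
          = star (V₀ : Matrix (Fin (2 ^ n)) (Fin (2 ^ n)) ℂ)
            * (V : Matrix (Fin (2 ^ n)) (Fin (2 ^ n)) ℂ) := by
        rw [Submonoid.coe_mul, ← Unitary.star_eq_inv, Unitary.coe_star]
      have hstar : star (V₀ : Matrix (Fin (2 ^ n)) (Fin (2 ^ n)) ℂ)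
          * (V₀ : Matrix (Fin (2 ^ n)) (Fin (2 ^ n)) ℂ) = 1 :=
        Matrix.mem_unitaryGroup_iff'.mp V₀.2
      have heq : (1 : Matrix (Fin (2 ^ n)) (Fin (2 ^ n)) ℂ)
          - star (V₀ : Matrix (Fin (2 ^ n)) (Fin (2 ^ n)) ℂ)
            * (V : Matrix (Fin (2 ^ n)) (Fin (2 ^ n)) ℂ)
          = star (V₀ : Matrix (Fin (2 ^ n)) (Fin (2 ^ n)) ℂ)
            * ((V₀ : Matrix (Fin (2 ^ n)) (Fin (2 ^ n)) ℂ)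
              - (V : Matrix (Fin (2 ^ n)) (Fin (2 ^ n)) ℂ)) := by
        rw [Matrix.mul_sub, hstar]
      have hAA : (star (V₀ : Matrix (Fin (2 ^ n)) (Fin (2 ^ n)) ℂ))ᴴ
          * star (V₀ : Matrix (Fin (2 ^ n)) (Fin (2 ^ n)) ℂ) = 1 := by
        rw [Matrix.star_eq_conjTranspose, Matrix.conjTranspose_conjTranspose]
        have h := Matrix.mem_unitaryGroup_iff.mp V₀.2
        rwa [Matrix.star_eq_conjTranspose] at h
      have hfr : frobNorm ((1 : Matrix (Fin (2 ^ n)) (Fin (2 ^ n)) ℂ)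
          - star (V₀ : Matrix (Fin (2 ^ n)) (Fin (2 ^ n)) ℂ)
            * (V : Matrix (Fin (2 ^ n)) (Fin (2 ^ n)) ℂ))
          = frobNorm ((V₀ : Matrix (Fin (2 ^ n)) (Fin (2 ^ n)) ℂ)
            - (V : Matrix (Fin (2 ^ n)) (Fin (2 ^ n)) ℂ)) := by
        rw [heq, VolAux.frobNorm_eq, VolAux.frobNorm_eq, VolAux.frobSq_mul_of hAA]
      rw [hco, hfr]
      exact key V hV
    have hent : ∀ i j : Fin (2 ^ n), Measurable
        (fun V : Matrix.unitaryGroup (Fin (2 ^ n)) ℂ =>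
          (V : Matrix (Fin (2 ^ n)) (Fin (2 ^ n)) ℂ) i j) := by
      intro i j
      have hc : Measurable ((↑) : Matrix.unitaryGroup (Fin (2 ^ n)) ℂ →
          Matrix (Fin (2 ^ n)) (Fin (2 ^ n)) ℂ) := measurable_subtype_coe
      have h1 : Measurable (fun M : Matrix (Fin (2 ^ n)) (Fin (2 ^ n)) ℂ => M i) :=
        measurable_pi_apply i
      have h2 : Measurable (fun g : Fin (2 ^ n) → ℂ => g j) := measurable_pi_apply j
      exact h2.comp (h1.comp hc)
    have hfmeas : Measurable (fun V : Matrix.unitaryGroup (Fin (2 ^ n)) ℂ =>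
        frobNorm (1 - (V : Matrix (Fin (2 ^ n)) (Fin (2 ^ n)) ℂ))) := by
      apply Measurable.comp Real.continuous_sqrt.measurable
      apply Finset.measurable_sum
      intro i _
      apply Finset.measurable_sum
      intro j _
      apply Measurable.pow_const
      exact continuous_norm.measurable.comp (measurable_const.sub (hent i j))
    have hBmeas : MeasurableSet B := by
      rw [hB]
      exact measurableSet_lt hfmeas measurable_const
    have hTcoe : Measurable (fun V : Matrix.unitaryGroup (Fin (2 ^ n)) ℂ =>
        ((V₀⁻¹ * V : Matrix.unitaryGroup (Fin (2 ^ n)) ℂ) :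
          Matrix (Fin (2 ^ n)) (Fin (2 ^ n)) ℂ)) := by
      have he : (fun V : Matrix.unitaryGroup (Fin (2 ^ n)) ℂ =>
          ((V₀⁻¹ * V : Matrix.unitaryGroup (Fin (2 ^ n)) ℂ) :
            Matrix (Fin (2 ^ n)) (Fin (2 ^ n)) ℂ))
          = fun V : Matrix.unitaryGroup (Fin (2 ^ n)) ℂ =>
            ((V₀⁻¹ : Matrix.unitaryGroup (Fin (2 ^ n)) ℂ) :
              Matrix (Fin (2 ^ n)) (Fin (2 ^ n)) ℂ)
              * (V : Matrix (Fin (2 ^ n)) (Fin (2 ^ n)) ℂ) := rfl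
      rw [he]
      apply measurable_pi_lambda
      intro i
      apply measurable_pi_lambda
      intro j
      simp only [Matrix.mul_apply]
      apply Finset.measurable_sum
      intro k _
      exact (hent k j).const_mul _
    have hTm : Measurable (fun V : Matrix.unitaryGroup (Fin (2 ^ n)) ℂ => V₀⁻¹ * V) :=
      hTcoe.subtype_mk
    calc μ S ≤ μ ((fun V => V₀⁻¹ * V) ⁻¹' B) := measure_mono hsub
    _ = μ.map (fun V => V₀⁻¹ * V) B := (Measure.map_apply hTm hBmeas).symm
    _ = μ B := by rw [map_mul_left_eq_self μ V₀⁻¹]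
end
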